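/- Let G be a DAG with a satisfying utility function α for thresholds (1, λ), let i ≥ 1 be an integer, and let G' be the subgraph of G keeping only edges (u,v) with α(v) - α(u) ≥ i. If K is a clique of G of size s, then G' contains a clique of size at least ⌈s / i⌉. -/

import Mathlib

/-- A finite set of reals contained in `[a, a+i)` with pairwise gaps `≥ 1`
has at most `i` elements. -/
lemma gap_card_le (S : Finset ℝ) (a : ℝ) (i : ℕ)
    (hmem : ∀ x ∈ S, a ≤ x ∧ x < a + i)
    (hgap : ∀ x ∈ S, ∀ y ∈ S, x ≠ y → 1 ≤ |x - y|) : S.card ≤ i := by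
  classical
  have : S.card ≤ (Finset.range i).card := by
    apply Finset.card_le_card_of_injOn (fun x => (⌊x - a⌋).toNat)
    · intro x hx
      obtain ⟨h1, h2⟩ := hmem x hx
      have h0 : (0 : ℤ) ≤ ⌊x - a⌋ := Int.le_floor.mpr (by push_cast; linarith)
      have hlt : ⌊x - a⌋ < (i : ℤ) := by
        have := Int.floor_le (x - a)
        exact_mod_cast Int.lt_of_le_of_lt (le_refl _) (by
          have : (⌊x - a⌋ : ℝ) < i := by linarith
          exact_mod_cast this)
      simp only [Finset.mem_coe, Finset.mem_range]
      omega
    · intro x hx y hy hxy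
      by_contra hne
      have hfl : ⌊x - a⌋ = ⌊y - a⌋ := by
        obtain ⟨h1x, _⟩ := hmem x hx
        obtain ⟨h1y, _⟩ := hmem y hy
        have h0x : (0 : ℤ) ≤ ⌊x - a⌋ := Int.le_floor.mpr (by push_cast; linarith)
        have h0y : (0 : ℤ) ≤ ⌊y - a⌋ := Int.le_floor.mpr (by push_cast; linarith)
        have hxy' : (⌊x - a⌋).toNat = (⌊y - a⌋).toNat := hxy
        omega
      have h1 := Int.floor_le (x - a)
      have h2 := Int.lt_floor_add_one (x - a)
      have h3 := Int.floor_le (y - a)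
      have h4 := Int.lt_floor_add_one (y - a)
      rw [hfl] at h1 h2
      have hg := hgap x hx y hy hne
      rcases abs_cases (x - y) with ⟨he, _⟩ | ⟨he, _⟩ <;> rw [he] at hg <;> linarith
  simpa using this

theorem subgraph_clique {V : Type*} (E : V → V → Prop)
    (lam : ℝ) (α : V → ℝ)
    (hedge : ∀ u v, E u v → α v - α u ≥ 1)
    (hhop : ∀ u v, u ≠ v → ¬ E u v → ¬ E v u → |α v - α u| ≤ lam)
    (i : ℕ) (hi : 1 ≤ i)
    (K : Finset V) (hK : ∀ u ∈ K, ∀ v ∈ K, u ≠ v → E u v ∨ E v u) :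
    ∃ K' : Finset V, K' ⊆ K ∧
      (∀ u ∈ K', ∀ v ∈ K', u ≠ v →
        (E u v ∧ α v - α u ≥ (i : ℝ)) ∨ (E v u ∧ α u - α v ≥ (i : ℝ))) ∧
      (K.card : ℝ) / (i : ℝ) ≤ (K'.card : ℝ) := by
  classical
  have hipos : (0 : ℝ) < (i : ℝ) := by exact_mod_cast hi
  suffices H : ∀ n (K : Finset V), K.card = n →
      (∀ u ∈ K, ∀ v ∈ K, u ≠ v → E u v ∨ E v u) →
      ∃ K' : Finset V, K' ⊆ K ∧
        (∀ u ∈ K', ∀ v ∈ K', u ≠ v →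
          (E u v ∧ α v - α u ≥ (i : ℝ)) ∨ (E v u ∧ α u - α v ≥ (i : ℝ))) ∧
        (K.card : ℝ) / (i : ℝ) ≤ (K'.card : ℝ) by
    exact H K.card K rfl hK
  intro n
  induction n using Nat.strong_induction_on with
  | _ n ih =>
    intro K hcard hK
    rcases K.eq_empty_or_nonempty with rfl | hne
    · exact ⟨∅, by simp⟩
    · obtain ⟨u, hu, hmin⟩ := K.exists_min_image α hne
      -- pairwise gaps of at least 1 on K
      have hgapK : ∀ x ∈ K, ∀ y ∈ K, x ≠ y → 1 ≤ |α x - α y| := by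
        intro x hx y hy hxy
        rcases hK x hx y hy hxy with h | h
        · have := hedge x y h
          rw [abs_sub_comm]; rw [le_abs]; left; linarith
        · have := hedge y x h
          rw [le_abs]; left; linarith
      set R := K.filter (fun v => α v < α u + i) with hR
      set K₂ := K.filter (fun v => ¬ (α v < α u + i)) with hK₂
      have hK₂sub : K₂ ⊆ K := Finset.filter_subset _ _
      have huR : u ∈ R := by
        simp only [hR, Finset.mem_filter]
        exact ⟨hu, by linarith⟩
      have huK₂ : u ∉ K₂ := by
        simp only [hK₂, Finset.mem_filter]
        push_neg
        intro _
        linarith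
      -- bound the card of R
      have hinjR : Set.InjOn α R := by
        intro x hx y hy hxy
        by_contra hne'
        have hxK : x ∈ K := Finset.filter_subset _ _ (Finset.mem_coe.mp hx)
        have hyK : y ∈ K := Finset.filter_subset _ _ (Finset.mem_coe.mp hy)
        have := hgapK x hxK y hyK hne'
        rw [hxy] at this
        simp at this
        linarith
      have hRcard : R.card ≤ i := by
        have himg : (R.image α).card = R.card := Finset.card_image_of_injOn hinjR
        rw [← himg]
        apply gap_card_le (R.image α) (α u) i
        · intro x hx
          simp only [Finset.mem_image] at hx
          obtain ⟨v, hv, rfl⟩ := hx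
          simp only [hR, Finset.mem_filter] at hv
          exact ⟨hmin v hv.1, hv.2⟩
        · intro x hx y hy hxy
          simp only [Finset.mem_image] at hx hy
          obtain ⟨v, hv, rfl⟩ := hx
          obtain ⟨w, hw, rfl⟩ := hy
          exact hgapK v (Finset.filter_subset _ _ hv) w (Finset.filter_subset _ _ hw)
            (fun h => hxy (by rw [h]))
      have hsplit : K.card = R.card + K₂.card := by
        rw [hR, hK₂]
        exact (Finset.card_filter_add_card_filter_not _).symm
      have hK₂lt : K₂.card < n := by
        rw [← hcard]
        exact Finset.card_lt_card (Finset.ssubset_iff_of_subset hK₂sub |>.mpr ⟨u, hu, huK₂⟩)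
      obtain ⟨K', hsub, hprop, hlb⟩ := ih K₂.card hK₂lt K₂ rfl
        (fun x hx y hy hxy => hK x (hK₂sub hx) y (hK₂sub hy) hxy)
      have huK' : u ∉ K' := fun h => huK₂ (hsub h)
      -- elements of K₂ are i-far from u and edge goes u → v
      have hfar : ∀ v ∈ K₂, E u v ∧ α v - α u ≥ (i : ℝ) := by
        intro v hv
        simp only [hK₂, Finset.mem_filter, not_lt] at hv
        have hge : α v - α u ≥ (i : ℝ) := by linarith [hv.2]
        have hne' : u ≠ v := fun h => huK₂ (by rw [h]; simp [hK₂, Finset.mem_filter]; exact ⟨hv.1, by linarith [hv.2]⟩)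
        rcases hK u hu v hv.1 hne' with h | h
        · exact ⟨h, hge⟩
        · exfalso
          have := hedge v u h
          have : (1:ℝ) ≤ (i:ℝ) := by exact_mod_cast hi
          linarith [hedge v u h]
      refine ⟨insert u K', ?_, ?_, ?_⟩
      · exact Finset.insert_subset hu (hsub.trans hK₂sub)
      · intro x hx y hy hxy
        rcases Finset.mem_insert.mp hx with rfl | hx'
        · rcases Finset.mem_insert.mp hy with rfl | hy'
          · exact absurd rfl hxy
          · exact Or.inl (hfar y (hsub hy'))
        · rcases Finset.mem_insert.mp hy with rfl | hy'
          · exact Or.inr (hfar x (hsub hx'))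
          · exact hprop x hx' y hy' hxy
      · rw [Finset.card_insert_of_notMem huK']
        have : (K.card : ℝ) ≤ (K₂.card : ℝ) + (i : ℝ) := by
          rw [hsplit]; push_cast
          have : (R.card : ℝ) ≤ (i : ℝ) := by exact_mod_cast hRcard
          linarith
        have hdiv : (K.card : ℝ) / (i : ℝ) ≤ (K₂.card : ℝ) / (i : ℝ) + 1 := by
          rw [div_add' _ _ _ (ne_of_gt hipos), div_le_div_iff_of_pos_right hipos]
          linarith
        push_cast
        linarith
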